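/- (Buchdahl bound.) Let G, ρ, R > 0, set M(r) = (4/3)·π·r³·ρ and Mtot = (4/3)·π·R³·ρ, and assume 2·G·Mtot/R < 1. Suppose p : [0,R] → ℝ is continuous, nonnegative, differentiable on (0,R), satisfies p(R) = 0, and satisfies the Tolman–Oppenheimer–Volkoff equation p'(r) = −G·( ρ + p(r) )·( M(r) + 4π r³ p(r) )/( r·( r − 2·G·M(r) ) ) for all r ∈ (0,R). Then G·Mtot/R < 4/9. -/

import Mathlib

open Set

/-- Buchdahl bound: a constant-density relativistic star with continuous nonnegative
pressure satisfying the Tolman–Oppenheimer–Volkoff equation and `p R = 0` must have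
`G·Mtot/R < 4/9`. -/
theorem stmt19 (G ρ R : ℝ) (hG : 0 < G) (hρ : 0 < ρ) (hR : 0 < R)
    (M : ℝ → ℝ) (hM : ∀ r, M r = (4 / 3) * Real.pi * r ^ 3 * ρ)
    (hhorizon : 2 * G * M R / R < 1)
    (p : ℝ → ℝ) (hp_cont : ContinuousOn p (Icc 0 R))
    (hp_nonneg : ∀ r ∈ Icc (0 : ℝ) R, 0 ≤ p r)
    (hp_deriv : ∀ r ∈ Ioo (0 : ℝ) R,
      HasDerivAt p
        (-(G * (ρ + p r) * (M r + 4 * Real.pi * r ^ 3 * p r))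
          / (r * (r - 2 * G * M r))) r)
    (hpR : p R = 0) :
    G * M R / R < 4 / 9 := by
  have hπ := Real.pi_pos
  set k : ℝ := 8 / 3 * Real.pi * G * ρ with hk
  have hk0 : 0 < k := by positivity
  have hkR : k * R ^ 2 < 1 := by
    have h := hhorizon
    rw [hM, div_lt_one hR] at h
    rw [hk]
    nlinarith [h, hR, mul_pos hG hρ]
  have hpos : ∀ r ∈ Icc (0 : ℝ) R, 0 < 1 - k * r ^ 2 := by
    intro r hr
    have hrR : r ^ 2 ≤ R ^ 2 := by nlinarith [hr.1, hr.2]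
    have h1 : k * r ^ 2 ≤ k * R ^ 2 := mul_le_mul_of_nonneg_left hrR hk0.le
    linarith
  set Q : ℝ → ℝ := fun r => (ρ + p r) ^ 2 * (1 - k * r ^ 2) / (ρ + 3 * p r) ^ 2
    with hQdef
  have hdenpos : ∀ r ∈ Icc (0 : ℝ) R, 0 < ρ + 3 * p r := by
    intro r hr
    have := hp_nonneg r hr
    linarith
  have hQderiv : ∀ r ∈ Ioo (0 : ℝ) R, HasDerivAt Q 0 r := by
    intro r hr
    have hri : r ∈ Icc (0 : ℝ) R := ⟨hr.1.le, hr.2.le⟩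
    have hp0 := hp_nonneg r hri
    have hr0 : r ≠ 0 := ne_of_gt hr.1
    have h1k : 0 < 1 - k * r ^ 2 := hpos r hri
    have hd : 0 < ρ + 3 * p r := hdenpos r hri
    have hρp : 0 < ρ + p r := by linarith
    have hval : (-(G * (ρ + p r) * (M r + 4 * Real.pi * r ^ 3 * p r))
          / (r * (r - 2 * G * M r)))
        = -(k * r * (ρ + p r) * (ρ + 3 * p r)) / (2 * ρ * (1 - k * r ^ 2)) := by
      rw [hM]
      have hd1 : r * (r - 2 * G * (4 / 3 * Real.pi * r ^ 3 * ρ)) ≠ 0 := by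
        have : r * (r - 2 * G * (4 / 3 * Real.pi * r ^ 3 * ρ))
            = r ^ 2 * (1 - k * r ^ 2) := by rw [hk]; ring
        rw [this]
        positivity
      have hd2 : 2 * ρ * (1 - k * r ^ 2) ≠ 0 := by positivity
      rw [div_eq_div_iff hd1 hd2, hk]
      ring
    have hpd : HasDerivAt p
        (-(k * r * (ρ + p r) * (ρ + 3 * p r)) / (2 * ρ * (1 - k * r ^ 2))) r :=
      hval ▸ hp_deriv r hr
    set v : ℝ := -(k * r * (ρ + p r) * (ρ + 3 * p r)) / (2 * ρ * (1 - k * r ^ 2))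
      with hv
    have hnum : HasDerivAt (fun r => (ρ + p r) ^ 2 * (1 - k * r ^ 2))
        ((2 * (ρ + p r) ^ 1 * (0 + v)) * (1 - k * r ^ 2)
          + (ρ + p r) ^ 2 * (0 - k * (2 * r ^ 1))) r := by
      exact (((hasDerivAt_const r ρ).add hpd).pow 2).mul
        ((hasDerivAt_const r 1).sub (((hasDerivAt_pow 2 r)).const_mul k))
    have hden : HasDerivAt (fun r => (ρ + 3 * p r) ^ 2)
        (2 * (ρ + 3 * p r) ^ 1 * (0 + 3 * v)) r :=
      ((hasDerivAt_const r ρ).add (hpd.const_mul 3)).pow 2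
    have hQ := hnum.div hden (by positivity)
    refine hQ.congr_deriv ?_
    symm
    rw [hv]
    have hρ0 : (ρ : ℝ) ≠ 0 := ne_of_gt hρ
    have h1k0 : (1 - k * r ^ 2) ≠ 0 := ne_of_gt h1k
    have hd0 : (ρ + 3 * p r) ≠ 0 := ne_of_gt hd
    field_simp
    ring
  have hQcont : ContinuousOn Q (Icc 0 R) := by
    apply ContinuousOn.div
    · exact (((continuousOn_const.add hp_cont).pow 2).mul
        (continuousOn_const.sub (continuousOn_const.mul
          ((continuousOn_pow 2))))).congr (fun x hx => rfl)
    · exact ((continuousOn_const.add (continuousOn_const.mul hp_cont)).pow 2)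
    · intro x hx
      exact pow_ne_zero 2 (ne_of_gt (hdenpos x hx))
  have hQdiff : DifferentiableOn ℝ Q (interior (Icc (0 : ℝ) R)) := by
    rw [interior_Icc]
    intro x hx
    exact ((hQderiv x hx).differentiableAt).differentiableWithinAt
  have hQd0 : ∀ x ∈ interior (Icc (0 : ℝ) R), deriv Q x = 0 := by
    rw [interior_Icc]
    intro x hx
    exact (hQderiv x hx).deriv
  have hmem0 : (0 : ℝ) ∈ Icc (0 : ℝ) R := ⟨le_refl 0, hR.le⟩
  have hmemR : R ∈ Icc (0 : ℝ) R := ⟨hR.le, le_refl R⟩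
  have hmono : MonotoneOn Q (Icc 0 R) :=
    monotoneOn_of_deriv_nonneg (convex_Icc 0 R) hQcont hQdiff
      (fun x hx => le_of_eq (hQd0 x hx).symm)
  have hanti : AntitoneOn Q (Icc 0 R) :=
    antitoneOn_of_deriv_nonpos (convex_Icc 0 R) hQcont hQdiff
      (fun x hx => le_of_eq (hQd0 x hx))
  have hQeq : Q 0 = Q R :=
    le_antisymm (hmono hmem0 hmemR hR.le) (hanti hmem0 hmemR hR.le)
  have hQR : Q R = 1 - k * R ^ 2 := by
    rw [hQdef]
    simp only [hpR]
    field_simp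
    ring
  have hQ0 : Q 0 = (ρ + p 0) ^ 2 / (ρ + 3 * p 0) ^ 2 := by
    rw [hQdef]
    norm_num
  have hp00 := hp_nonneg 0 hmem0
  have hd00 : 0 < ρ + 3 * p 0 := hdenpos 0 hmem0
  have hQ0gt : 1 / 9 < Q 0 := by
    rw [hQ0, div_lt_div_iff₀ (by norm_num) (by positivity)]
    nlinarith
  have hfin : k * R ^ 2 < 8 / 9 := by
    have : (1 : ℝ) / 9 < 1 - k * R ^ 2 := by rw [← hQR, ← hQeq]; exact hQ0gt
    linarith
  rw [hM, div_lt_iff₀ hR]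
  rw [hk] at hfin
  nlinarith [hfin]
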